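/- Let constants a ∈ ℝ, b ≠ 0, K ∈ ℝ, T > 0 be given. Define for x ≤ K and t < T: γ(x,t) = (1/2)·erfc( (K − x − a(T−t)) / (|b|√(2(T−t))) ) + (1/2)·exp( 2a(K−x)/b² )·erfc( (K − x + a(T−t)) / (|b|√(2(T−t))) ). Then γ satisfies the backward PDE ∂γ/∂t = −a ∂γ/∂x − (b²/2) ∂²γ/∂x² on (−∞,K)×(0,T), with γ(K,t) = 1 for t ≤ T, γ(x,t) → 0 as x → −∞, and γ(x,t) → 0 as t → T for each fixed x < K. -/

import Mathlib

open Filter MeasureTheory Set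

noncomputable def erfc (z : ℝ) : ℝ :=
  (2 / Real.sqrt Real.pi) * ∫ s in Set.Ioi z, Real.exp (-s^2)

lemma gauss_integrable : Integrable (fun s : ℝ => Real.exp (-s^2)) := by
  simpa using integrable_exp_neg_mul_sq (one_pos)

lemma gauss_cont : Continuous (fun s : ℝ => Real.exp (-s^2)) := by
  continuity

lemma sqrt_pi_pos : 0 < Real.sqrt Real.pi := Real.sqrt_pos.2 Real.pi_pos

lemma gauss_Ioi_zero : ∫ s in Set.Ioi (0:ℝ), Real.exp (-s^2) = Real.sqrt Real.pi / 2 := by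
  simpa using integral_gaussian_Ioi 1

lemma erfc_zero : erfc 0 = 1 := by
  rw [erfc, gauss_Ioi_zero]
  field_simp

lemma erfc_eq_sub (z : ℝ) :
    erfc z = 1 - (2 / Real.sqrt Real.pi) * ∫ s in (0:ℝ)..z, Real.exp (-s^2) := by
  have h1 : (∫ s in Set.Iic z, Real.exp (-s^2)) - ∫ s in Set.Iic (0:ℝ), Real.exp (-s^2)
      = ∫ s in (0:ℝ)..z, Real.exp (-s^2) :=
    intervalIntegral.integral_Iic_sub_Iic gauss_integrable.integrableOn gauss_integrable.integrableOn
  have h2 : (∫ s in Set.Iic z, Real.exp (-s^2)) + ∫ s in Set.Ioi z, Real.exp (-s^2)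
      = ∫ s : ℝ, Real.exp (-s^2) :=
    intervalIntegral.integral_Iic_add_Ioi gauss_integrable.integrableOn gauss_integrable.integrableOn
  have h3 : (∫ s in Set.Iic (0:ℝ), Real.exp (-s^2)) + ∫ s in Set.Ioi (0:ℝ), Real.exp (-s^2)
      = ∫ s : ℝ, Real.exp (-s^2) :=
    intervalIntegral.integral_Iic_add_Ioi gauss_integrable.integrableOn gauss_integrable.integrableOn
  have e0 : erfc 0 = 1 := erfc_zero
  rw [erfc] at e0 ⊢
  linear_combination (2 / Real.sqrt Real.pi) * (h2 - h3 - h1) + e0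

lemma erfc_hasDerivAt (z : ℝ) :
    HasDerivAt erfc (-(2 / Real.sqrt Real.pi * Real.exp (-z^2))) z := by
  have h : HasDerivAt (fun u => ∫ s in (0:ℝ)..u, Real.exp (-s^2)) (Real.exp (-z^2)) z :=
    intervalIntegral.integral_hasDerivAt_right (gauss_integrable.intervalIntegrable)
      gauss_cont.aestronglyMeasurable.stronglyMeasurableAtFilter gauss_cont.continuousAt
  have := ((h.const_mul (2 / Real.sqrt Real.pi)).const_sub 1)
  refine (this.congr_deriv ?_).congr_of_eventuallyEq (Eventually.of_forall fun u => (erfc_eq_sub u))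
  ring

lemma erfc_nonneg (z : ℝ) : 0 ≤ erfc z := by
  apply mul_nonneg (by positivity)
  exact setIntegral_nonneg measurableSet_Ioi fun s _ => (Real.exp_pos _).le


lemma erfc_add_neg (z : ℝ) : erfc z + erfc (-z) = 2 := by
  have h : (∫ s in Set.Ioi (-z), Real.exp (-s^2)) = ∫ s in Set.Iic z, Real.exp (-s^2) := by
    have := integral_comp_neg_Iic z (fun s => Real.exp (-s^2))
    simpa [neg_sq] using this.symm
  have h2 : (∫ s in Set.Iic z, Real.exp (-s^2)) + ∫ s in Set.Ioi z, Real.exp (-s^2)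
      = ∫ s : ℝ, Real.exp (-s^2) :=
    intervalIntegral.integral_Iic_add_Ioi gauss_integrable.integrableOn gauss_integrable.integrableOn
  have h3 : (∫ s : ℝ, Real.exp (-s^2)) = Real.sqrt Real.pi := by
    simpa using integral_gaussian 1
  rw [erfc, erfc, h]
  rw [h3] at h2
  have hπ := sqrt_pi_pos
  field_simp
  linarith [h2]

lemma neg_exp_half_hasDerivAt (x : ℝ) :
    HasDerivAt (fun s : ℝ => -Real.exp (-s^2) / 2) (x * Real.exp (-x^2)) x := by
  have h1 : HasDerivAt (fun s : ℝ => -s^2) (-(2*x)) x := by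
    simpa using ((hasDerivAt_pow 2 x).fun_neg)
  have := ((h1.exp).fun_neg.div_const 2)
  refine this.congr_deriv ?_
  ring_nf

lemma tendsto_neg_exp_half : Tendsto (fun s : ℝ => -Real.exp (-s^2) / 2) atTop (nhds 0) := by
  have h2 : Tendsto (fun s : ℝ => -s^2) atTop atBot :=
    tendsto_neg_atTop_atBot.comp (tendsto_pow_atTop two_ne_zero)
  have := (Real.tendsto_exp_atBot.comp h2).neg.div_const 2
  simpa using this

lemma int_s_exp (z : ℝ) (hz : 0 ≤ z) :
    IntegrableOn (fun s : ℝ => s * Real.exp (-s^2)) (Set.Ioi z) := by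
  apply MeasureTheory.integrableOn_Ioi_deriv_of_nonneg
    (Continuous.continuousWithinAt (by continuity)) (fun x _ => neg_exp_half_hasDerivAt x)
  · intro x hx
    exact mul_nonneg (le_of_lt (hz.trans_lt hx)) (Real.exp_pos _).le
  · exact tendsto_neg_exp_half

lemma int_s_exp_eq (z : ℝ) (hz : 0 ≤ z) :
    ∫ s in Set.Ioi z, s * Real.exp (-s^2) = Real.exp (-z^2) / 2 := by
  have := MeasureTheory.integral_Ioi_of_hasDerivAt_of_tendsto
    (Continuous.continuousWithinAt (by continuity : Continuous (fun s : ℝ => -Real.exp (-s^2) / 2)))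
    (fun x _ => neg_exp_half_hasDerivAt x) (int_s_exp z hz) tendsto_neg_exp_half
  rw [this]; ring

lemma erfc_le_exp {z : ℝ} (hz : 1 ≤ z) : erfc z ≤ Real.exp (-z^2) := by
  have h0 : (0:ℝ) ≤ z := by linarith
  have hmono : (∫ s in Set.Ioi z, Real.exp (-s^2)) ≤ ∫ s in Set.Ioi z, s * Real.exp (-s^2) := by
    apply setIntegral_mono_on gauss_integrable.integrableOn (int_s_exp z h0) measurableSet_Ioi
    intro s hs
    nlinarith [Real.exp_pos (-s^2), le_of_lt (hz.trans_lt hs)]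
  rw [erfc]
  rw [int_s_exp_eq z h0] at hmono
  have hπ : (1:ℝ) ≤ Real.sqrt Real.pi := by
    rw [show (1:ℝ) = Real.sqrt 1 by simp]
    exact Real.sqrt_le_sqrt (by linarith [Real.pi_gt_three])
  have h2 : 2 / Real.sqrt Real.pi ≤ 2 := by
    rw [div_le_iff₀ sqrt_pi_pos]; nlinarith
  calc (2 / Real.sqrt Real.pi) * ∫ s in Set.Ioi z, Real.exp (-s^2)
      ≤ (2 / Real.sqrt Real.pi) * (Real.exp (-z^2) / 2) := by
        apply mul_le_mul_of_nonneg_left hmono (by positivity)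
    _ ≤ 2 * (Real.exp (-z^2) / 2) := by
        apply mul_le_mul_of_nonneg_right h2 (by positivity)
    _ = Real.exp (-z^2) := by ring

lemma erfc_tendsto_zero : Tendsto erfc atTop (nhds 0) := by
  apply tendsto_of_tendsto_of_tendsto_of_le_of_le' tendsto_const_nhds
    (by simpa using (Real.tendsto_exp_atBot.comp
      (tendsto_neg_atTop_atBot.comp (tendsto_pow_atTop two_ne_zero))))
  · exact Eventually.of_forall fun z => erfc_nonneg z
  · filter_upwards [eventually_ge_atTop (1:ℝ)] with z hz
    exact erfc_le_exp hz

set_option maxHeartbeats 2000000 in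
/-- Closed-form solution of the constant-coefficient Kolmogorov backward equation with
absorbing boundary at `K`: the hitting probability of a drifted Brownian motion. -/
theorem frozen_coefficient_kbe_solution (a b K T : ℝ) (hb : b ≠ 0) (hT : 0 < T)
    (γ : ℝ → ℝ → ℝ)
    (hγ : ∀ x t, γ x t =
      (1/2) * erfc ((K - x - a * (T - t)) / (|b| * Real.sqrt (2 * (T - t))))
      + (1/2) * Real.exp (2 * a * (K - x) / b^2) *
          erfc ((K - x + a * (T - t)) / (|b| * Real.sqrt (2 * (T - t))))) :
    (∀ x < K, ∀ t ∈ Set.Ioo 0 T,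
      deriv (fun s => γ x s) t
        = -a * deriv (fun y => γ y t) x - (b^2 / 2) * deriv (deriv (fun y => γ y t)) x) ∧
    (∀ t ≤ T, γ K t = 1) ∧
    (∀ t < T, Tendsto (fun x => γ x t) atBot (nhds 0)) ∧
    (∀ x < K, Tendsto (fun t => γ x t) (nhdsWithin T (Set.Iio T)) (nhds 0)) := by
  have hbabs : (0:ℝ) < |b| := abs_pos.2 hb
  refine ⟨?_, ?_, ?_, ?_⟩
  · -- PDE
    intro x hx t ht
    obtain ⟨ht0, htT⟩ := ht
    have hτ : (0:ℝ) < T - t := by linarith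
    have hr : (0:ℝ) < Real.sqrt (2 * (T - t)) := Real.sqrt_pos.2 (by linarith)
    have hD : (|b| * Real.sqrt (2 * (T - t))) ≠ 0 := by positivity
    -- first spatial derivative, at every point y
    have hA : ∀ y : ℝ, HasDerivAt (fun y => γ y t) ((2 / Real.sqrt Real.pi) * Real.exp (-((K - y - a * (T - t)) / (|b| * Real.sqrt (2 * (T - t))))^2) / (2 * (|b| * Real.sqrt (2 * (T - t)))) - a / b^2 * Real.exp (2 * a * (K - y) / b^2) * erfc ((K - y + a * (T - t)) / (|b| * Real.sqrt (2 * (T - t)))) + (2 / Real.sqrt Real.pi) * Real.exp (2 * a * (K - y) / b^2) * Real.exp (-((K - y + a * (T - t)) / (|b| * Real.sqrt (2 * (T - t))))^2) / (2 * (|b| * Real.sqrt (2 * (T - t))))) y := by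
      intro y
      have h1 : HasDerivAt (fun y : ℝ => ((K - y - a * (T - t)) / (|b| * Real.sqrt (2 * (T - t))))) ((0 - 1) / (|b| * Real.sqrt (2 * (T - t)))) y :=
        (((hasDerivAt_const y K).sub (hasDerivAt_id y)).sub_const _).div_const _
      have h2 : HasDerivAt (fun y : ℝ => ((K - y + a * (T - t)) / (|b| * Real.sqrt (2 * (T - t))))) ((0 - 1) / (|b| * Real.sqrt (2 * (T - t)))) y :=
        (((hasDerivAt_const y K).sub (hasDerivAt_id y)).add_const _).div_const _
      have e1 := (erfc_hasDerivAt ((K - y - a * (T - t)) / (|b| * Real.sqrt (2 * (T - t))))).comp y h1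
      have e2 := (erfc_hasDerivAt ((K - y + a * (T - t)) / (|b| * Real.sqrt (2 * (T - t))))).comp y h2
      have hE : HasDerivAt (fun y : ℝ => Real.exp (2 * a * (K - y) / b^2))
          (Real.exp (2 * a * (K - y) / b^2) * (2 * a * (0 - 1) / b^2)) y :=
        ((((hasDerivAt_const y K).sub (hasDerivAt_id y)).const_mul (2 * a)).div_const (b^2)).exp
      have total := (e1.const_mul (1/2 : ℝ)).add ((hE.const_mul (1/2 : ℝ)).mul e2)
      refine ((total.congr_of_eventuallyEq (Eventually.of_forall fun y => hγ y t)).congr_deriv ?_)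
      simp only [Function.comp_def]
      field_simp
      ring
    have hd1 : deriv (fun y => γ y t) = fun y => (2 / Real.sqrt Real.pi) * Real.exp (-((K - y - a * (T - t)) / (|b| * Real.sqrt (2 * (T - t))))^2) / (2 * (|b| * Real.sqrt (2 * (T - t)))) - a / b^2 * Real.exp (2 * a * (K - y) / b^2) * erfc ((K - y + a * (T - t)) / (|b| * Real.sqrt (2 * (T - t)))) + (2 / Real.sqrt Real.pi) * Real.exp (2 * a * (K - y) / b^2) * Real.exp (-((K - y + a * (T - t)) / (|b| * Real.sqrt (2 * (T - t))))^2) / (2 * (|b| * Real.sqrt (2 * (T - t)))) :=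
      funext fun y => (hA y).deriv
    -- second spatial derivative at x
    have hC : HasDerivAt (fun y => (2 / Real.sqrt Real.pi) * Real.exp (-((K - y - a * (T - t)) / (|b| * Real.sqrt (2 * (T - t))))^2) / (2 * (|b| * Real.sqrt (2 * (T - t)))) - a / b^2 * Real.exp (2 * a * (K - y) / b^2) * erfc ((K - y + a * (T - t)) / (|b| * Real.sqrt (2 * (T - t)))) + (2 / Real.sqrt Real.pi) * Real.exp (2 * a * (K - y) / b^2) * Real.exp (-((K - y + a * (T - t)) / (|b| * Real.sqrt (2 * (T - t))))^2) / (2 * (|b| * Real.sqrt (2 * (T - t))))) ((2 / Real.sqrt Real.pi) * ((K - x - a * (T - t)) / (|b| * Real.sqrt (2 * (T - t)))) * Real.exp (-((K - x - a * (T - t)) / (|b| * Real.sqrt (2 * (T - t))))^2) / (|b| * Real.sqrt (2 * (T - t)))^2 + 2 * a^2 / b^4 * Real.exp (2 * a * (K - x) / b^2) * erfc ((K - x + a * (T - t)) / (|b| * Real.sqrt (2 * (T - t)))) - 2 * a * (2 / Real.sqrt Real.pi) / (b^2 * (|b| * Real.sqrt (2 * (T - t)))) * Real.exp (2 * a * (K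 - x) / b^2) * Real.exp (-((K - x + a * (T - t)) / (|b| * Real.sqrt (2 * (T - t))))^2) + (2 / Real.sqrt Real.pi) * ((K - x + a * (T - t)) / (|b| * Real.sqrt (2 * (T - t)))) * Real.exp (2 * a * (K - x) / b^2) * Real.exp (-((K - x + a * (T - t)) / (|b| * Real.sqrt (2 * (T - t))))^2) / (|b| * Real.sqrt (2 * (T - t)))^2) x := by
      have h1 : HasDerivAt (fun y : ℝ => ((K - y - a * (T - t)) / (|b| * Real.sqrt (2 * (T - t))))) ((0 - 1) / (|b| * Real.sqrt (2 * (T - t)))) x :=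
        (((hasDerivAt_const x K).sub (hasDerivAt_id x)).sub_const _).div_const _
      have h2 : HasDerivAt (fun y : ℝ => ((K - y + a * (T - t)) / (|b| * Real.sqrt (2 * (T - t))))) ((0 - 1) / (|b| * Real.sqrt (2 * (T - t)))) x :=
        (((hasDerivAt_const x K).sub (hasDerivAt_id x)).add_const _).div_const _
      have e2 := (erfc_hasDerivAt ((K - x + a * (T - t)) / (|b| * Real.sqrt (2 * (T - t))))).comp x h2
      have g1 : HasDerivAt (fun y : ℝ => Real.exp (-((K - y - a * (T - t)) / (|b| * Real.sqrt (2 * (T - t))))^2))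
          (Real.exp (-((K - x - a * (T - t)) / (|b| * Real.sqrt (2 * (T - t))))^2) * (-(2 * ((K - x - a * (T - t)) / (|b| * Real.sqrt (2 * (T - t))))^1 * ((0 - 1) / (|b| * Real.sqrt (2 * (T - t))))))) x := ((h1.pow 2).neg).exp
      have g2 : HasDerivAt (fun y : ℝ => Real.exp (-((K - y + a * (T - t)) / (|b| * Real.sqrt (2 * (T - t))))^2))
          (Real.exp (-((K - x + a * (T - t)) / (|b| * Real.sqrt (2 * (T - t))))^2) * (-(2 * ((K - x + a * (T - t)) / (|b| * Real.sqrt (2 * (T - t))))^1 * ((0 - 1) / (|b| * Real.sqrt (2 * (T - t))))))) x := ((h2.pow 2).neg).exp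
      have hE : HasDerivAt (fun y : ℝ => Real.exp (2 * a * (K - y) / b^2))
          (Real.exp (2 * a * (K - x) / b^2) * (2 * a * (0 - 1) / b^2)) x :=
        ((((hasDerivAt_const x K).sub (hasDerivAt_id x)).const_mul (2 * a)).div_const (b^2)).exp
      have t1 := (g1.const_mul (2 / Real.sqrt Real.pi)).div_const (2 * (|b| * Real.sqrt (2 * (T - t))))
      have t2 := (hE.const_mul (a / b^2)).mul e2
      have t3 := ((hE.const_mul (2 / Real.sqrt Real.pi)).mul g2).div_const (2 * (|b| * Real.sqrt (2 * (T - t))))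
      refine ((t1.sub t2).add t3).congr_deriv ?_
      simp only [Function.comp_def]
      field_simp
      ring
    -- time derivative at t
    have hDt : HasDerivAt (fun s : ℝ => (|b| * Real.sqrt (2 * (T - s))))
        (|b| * (1 / (2 * Real.sqrt (2 * (T - t))) * (2 * (0 - 1)))) t := by
      have hin : HasDerivAt (fun s : ℝ => 2 * (T - s)) (2 * (0 - 1)) t :=
        ((hasDerivAt_const t T).sub (hasDerivAt_id t)).const_mul 2
      exact ((Real.hasDerivAt_sqrt (by positivity : (2:ℝ) * (T - t) ≠ 0)).comp t hin).const_mul |b|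
    have hN1t : HasDerivAt (fun s : ℝ => K - x - a * (T - s)) (-(a * (0 - 1))) t :=
      ((((hasDerivAt_const t T).sub (hasDerivAt_id t)).const_mul a).const_sub (K - x))
    have hN2t : HasDerivAt (fun s : ℝ => K - x + a * (T - s)) (0 + a * (0 - 1)) t :=
      ((hasDerivAt_const t (K - x)).add (((hasDerivAt_const t T).sub (hasDerivAt_id t)).const_mul a))
    have hz1t := hN1t.div hDt hD
    have hz2t := hN2t.div hDt hD
    have e1t := (erfc_hasDerivAt ((K - x - a * (T - t)) / (|b| * Real.sqrt (2 * (T - t))))).comp t hz1t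
    have e2t := (erfc_hasDerivAt ((K - x + a * (T - t)) / (|b| * Real.sqrt (2 * (T - t))))).comp t hz2t
    have totalt := (e1t.const_mul (1/2 : ℝ)).add (e2t.const_mul (1/2 * Real.exp (2 * a * (K - x) / b^2)))
    have hTderiv : HasDerivAt (fun s => γ x s) (-((2 / Real.sqrt Real.pi) * Real.exp (-((K - x - a * (T - t)) / (|b| * Real.sqrt (2 * (T - t))))^2)) * ((a * (|b| * Real.sqrt (2 * (T - t))) + (K - x - a * (T - t)) * (|b| / Real.sqrt (2 * (T - t)))) / (|b| * Real.sqrt (2 * (T - t)))^2) / 2 + Real.exp (2 * a * (K - x) / b^2) * (-((2 / Real.sqrt Real.pi) * Real.exp (-((K - x + a * (T - t)) / (|b| * Real.sqrt (2 * (T - t))))^2))) * ((-a * (|b| * Real.sqrt (2 * (T - t))) + (K - x + a * (T - t)) * (|b| / Real.sqrt (2 * (T - t)))) / (|b| * Real.sqrt (2 * (T - t)))^2) / 2) t := by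
      refine ((totalt.congr_of_eventuallyEq (Eventually.of_forall fun s => hγ x s)).congr_deriv ?_)
      try simp only [Function.comp_def]
      ring
    rw [hTderiv.deriv, (hA x).deriv, hd1, hC.deriv]
    -- final algebraic identity
    set r := Real.sqrt (2 * (T - t)) with hrdef
    set G1 := Real.exp (-((K - x - a * (T - t)) / (|b| * r))^2) with hG1
    set G2 := Real.exp (-((K - x + a * (T - t)) / (|b| * r))^2) with hG2
    set Bv := erfc ((K - x + a * (T - t)) / (|b| * r)) with hB
    set Ev := Real.exp (2 * a * (K - x) / b^2) with hE
    have hb4 : b ^ 4 = |b| ^ 4 := by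
      rw [← abs_pow]; exact (abs_of_nonneg (by positivity)).symm
    have hb2 : b ^ 2 = |b| ^ 2 := (sq_abs b).symm
    rw [hb4, hb2]
    have hrne : r ≠ 0 := ne_of_gt hr
    have hβ : |b| ≠ 0 := ne_of_gt (abs_pos.2 hb)
    have hπ : Real.sqrt Real.pi ≠ 0 := ne_of_gt sqrt_pi_pos
    generalize |b| = β at hβ ⊢
    field_simp
    ring
  · -- boundary
    intro t _
    rw [hγ]
    have h1 : (K - K - a * (T - t)) / (|b| * Real.sqrt (2 * (T - t)))
        = -((K - K + a * (T - t)) / (|b| * Real.sqrt (2 * (T - t)))) := by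
      rw [← neg_div]; ring_nf
    rw [h1, show 2 * a * (K - K) / b^2 = 0 by ring_nf, Real.exp_zero]
    have := erfc_add_neg ((K - K + a * (T - t)) / (|b| * Real.sqrt (2 * (T - t))))
    linarith
  · -- x → -∞
    intro t ht
    have hτ : 0 < T - t := by linarith
    set c : ℝ := |b| * Real.sqrt (2 * (T - t)) with hcdef
    have hc : 0 < c := by positivity
    have hc2 : c^2 = 2 * b^2 * (T - t) := by
      rw [hcdef, mul_pow, sq_abs, Real.sq_sqrt (by linarith)]; ring
    have hz1 : Tendsto (fun x : ℝ => (K - x - a * (T - t)) / c) atBot atTop := by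
      apply Tendsto.atTop_div_const hc
      have : Tendsto (fun x : ℝ => -x) atBot atTop := tendsto_neg_atBot_atTop
      have h2 := tendsto_atTop_add_const_right atBot (K - a * (T - t)) this
      refine h2.congr fun x => by ring
    have hz2 : Tendsto (fun x : ℝ => (K - x + a * (T - t)) / c) atBot atTop := by
      apply Tendsto.atTop_div_const hc
      have : Tendsto (fun x : ℝ => -x) atBot atTop := tendsto_neg_atBot_atTop
      have h2 := tendsto_atTop_add_const_right atBot (K + a * (T - t)) this
      refine h2.congr fun x => by ring
    have hterm1 : Tendsto (fun x : ℝ => erfc ((K - x - a * (T - t)) / c)) atBot (nhds 0) :=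
      erfc_tendsto_zero.comp hz1
    have hexp : Tendsto (fun x : ℝ => Real.exp (-((K - x - a * (T - t)) / c)^2)) atBot (nhds 0) := by
      have h0 : Tendsto (fun s : ℝ => Real.exp (-s^2)) atTop (nhds 0) := by
        simpa using (Real.tendsto_exp_atBot.comp
          (tendsto_neg_atTop_atBot.comp (tendsto_pow_atTop two_ne_zero)))
      exact h0.comp hz1
    have hterm2 : Tendsto (fun x : ℝ => Real.exp (2 * a * (K - x) / b^2) *
        erfc ((K - x + a * (T - t)) / c)) atBot (nhds 0) := by
      apply tendsto_of_tendsto_of_tendsto_of_le_of_le' tendsto_const_nhds hexp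
      · exact Eventually.of_forall fun x =>
          mul_nonneg (Real.exp_pos _).le (erfc_nonneg _)
      · filter_upwards [hz2.eventually (eventually_ge_atTop (1:ℝ))] with x hx
        calc Real.exp (2 * a * (K - x) / b^2) * erfc ((K - x + a * (T - t)) / c)
            ≤ Real.exp (2 * a * (K - x) / b^2) *
                Real.exp (-((K - x + a * (T - t)) / c)^2) := by
              exact mul_le_mul_of_nonneg_left (erfc_le_exp hx) (Real.exp_pos _).le
          _ = Real.exp (-((K - x - a * (T - t)) / c)^2) := by
              rw [← Real.exp_add]
              congr 1
              have hcne : c ≠ 0 := ne_of_gt hc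
              have hτne : T - t ≠ 0 := ne_of_gt hτ
              rw [div_pow, div_pow, hc2]
              field_simp
              ring
    have := (hterm1.const_mul (1/2 : ℝ)).add (hterm2.const_mul (1/2 : ℝ))
    simp only [mul_zero, add_zero] at this
    refine Tendsto.congr (fun x => ?_) this
    rw [hγ]; ring
  · -- t → T⁻
    intro x hx
    have hu : 0 < K - x := by linarith
    have hτ : Tendsto (fun t : ℝ => T - t) (nhdsWithin T (Set.Iio T)) (nhdsWithin 0 (Set.Ioi 0)) := by
      apply tendsto_nhdsWithin_of_tendsto_nhds_of_eventually_within
      · have : Tendsto (fun t : ℝ => T - t) (nhds T) (nhds (T - T)) :=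
          (tendsto_const_nhds.sub tendsto_id)
        simpa using this.mono_left nhdsWithin_le_nhds
      · filter_upwards [self_mem_nhdsWithin] with t (ht : t < T)
        exact sub_pos.2 ht
    have hcinv : Tendsto (fun t : ℝ => (|b| * Real.sqrt (2 * (T - t)))⁻¹)
        (nhdsWithin T (Set.Iio T)) atTop := by
      apply tendsto_inv_nhdsGT_zero.comp
      apply tendsto_nhdsWithin_of_tendsto_nhds_of_eventually_within
      · have hsq : Tendsto (fun t : ℝ => Real.sqrt (2 * (T - t))) (nhdsWithin T (Set.Iio T))
            (nhds 0) := by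
          have : Tendsto (fun t : ℝ => Real.sqrt (2 * (T - t))) (nhdsWithin T (Set.Iio T))
              (nhds (Real.sqrt (2 * 0))) :=
            (Real.continuous_sqrt.tendsto _).comp
              ((tendsto_const_nhds.mul (hτ.mono_right nhdsWithin_le_nhds)))
          simpa using this
        simpa using hsq.const_mul |b|
      · filter_upwards [self_mem_nhdsWithin] with t (ht : t < T)
        have : 0 < Real.sqrt (2 * (T - t)) := Real.sqrt_pos.2 (by linarith)
        exact mul_pos hbabs this
    have hz1 : Tendsto (fun t : ℝ => (K - x - a * (T - t)) / (|b| * Real.sqrt (2 * (T - t))))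
        (nhdsWithin T (Set.Iio T)) atTop := by
      have hnum : Tendsto (fun t : ℝ => K - x - a * (T - t)) (nhdsWithin T (Set.Iio T))
          (nhds (K - x)) := by
        have := (tendsto_const_nhds (x := K - x)).sub
          ((hτ.mono_right nhdsWithin_le_nhds).const_mul a)
        simpa using this
      have := hnum.pos_mul_atTop hu hcinv
      exact this.congr fun t => (div_eq_mul_inv _ _).symm
    have hz2 : Tendsto (fun t : ℝ => (K - x + a * (T - t)) / (|b| * Real.sqrt (2 * (T - t))))
        (nhdsWithin T (Set.Iio T)) atTop := by
      have hnum : Tendsto (fun t : ℝ => K - x + a * (T - t)) (nhdsWithin T (Set.Iio T))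
          (nhds (K - x)) := by
        have := (tendsto_const_nhds (x := K - x)).add
          ((hτ.mono_right nhdsWithin_le_nhds).const_mul a)
        simpa using this
      have := hnum.pos_mul_atTop hu hcinv
      exact this.congr fun t => (div_eq_mul_inv _ _).symm
    have h1 := erfc_tendsto_zero.comp hz1
    have h2 := erfc_tendsto_zero.comp hz2
    have := (h1.const_mul (1/2 : ℝ)).add
      ((h2.const_mul (Real.exp (2 * a * (K - x) / b^2))).const_mul (1/2 : ℝ))
    simp only [mul_zero, add_zero] at this
    refine Tendsto.congr (fun t => ?_) this
    rw [hγ]; simp only [Function.comp]; ring
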